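/- Let S be a module over the Clifford algebra of a 2-dimensional inner product space, with skew-adjoint Clifford multiplication γ and orthonormal basis (e₁, e₂). For χ ∈ S × S the norm of the Q-projection satisfies the scaling law: if χ is replaced by e^{-u/2}χ and simultaneously the metric is rescaled by e^{2u} (so the orthonormal basis becomes e^{-u}e_α and spinor inner products are preserved by the isometric identification), then |Qχ|² rescales by e^{-u}. Combined with the rescaling |e^{-u/2}ψ|² = e^{-u}|ψ|², the product |Qχ|²|ψ|² rescales by e^{-2u}, and hence the term |Qχ|²|ψ|² dvol_g is invariant under the rescaled conformal transformation in dimension 2. -/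
import Mathlib


/-- Scaling behaviour of the gravitino terms under the rescaled
conformal transformation.  In components with respect to orthonormal frames,
with `β : S → S'` the isometric identification of spinor bundles intertwining the
Clifford multiplications, `|Q'(e^{-u/2}(β⊗b)χ)|² = e^{-u}|Qχ|²`,
`|e^{-u/2}(β⊗1)ψ|² = e^{-u}|ψ|²`, their product rescales by `e^{-2u}`, and together
with `dvol_{e^{2u}g} = e^{2u} dvol_g` the term `|Qχ|²|ψ|² dvol_g` is invariant. -/
theorem gravitino_norm_rescaled_conformal
    (S S' : Type*) [NormedAddCommGroup S] [InnerProductSpace ℝ S]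
    [NormedAddCommGroup S'] [InnerProductSpace ℝ S']
    (β : S →ₗᵢ[ℝ] S')
    (γ : Fin 2 → Module.End ℝ S) (γ' : Fin 2 → Module.End ℝ S')
    (hcompat : ∀ (α : Fin 2) (s : S), γ' α (β s) = β (γ α s))
    (u : ℝ) {n : ℕ} (χ : Fin 2 → S) (ψ : Fin n → S) :
    (∑ b : Fin 2,
        ‖-((1/2 : ℝ) • ∑ α, γ' α (γ' b (Real.exp (-(u/2)) • β (χ α))))‖ ^ 2
      = Real.exp (-u) * ∑ b : Fin 2, ‖-((1/2 : ℝ) • ∑ α, γ α (γ b (χ α)))‖ ^ 2) ∧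
    (∑ i, ‖Real.exp (-(u/2)) • β (ψ i)‖ ^ 2 = Real.exp (-u) * ∑ i, ‖ψ i‖ ^ 2) ∧
    ((∑ b : Fin 2,
        ‖-((1/2 : ℝ) • ∑ α, γ' α (γ' b (Real.exp (-(u/2)) • β (χ α))))‖ ^ 2) *
        (∑ i, ‖Real.exp (-(u/2)) • β (ψ i)‖ ^ 2)
      = Real.exp (-(2*u)) *
          ((∑ b : Fin 2, ‖-((1/2 : ℝ) • ∑ α, γ α (γ b (χ α)))‖ ^ 2) *
            (∑ i, ‖ψ i‖ ^ 2))) ∧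
    (Real.exp (2*u) *
        ((∑ b : Fin 2,
          ‖-((1/2 : ℝ) • ∑ α, γ' α (γ' b (Real.exp (-(u/2)) • β (χ α))))‖ ^ 2) *
          (∑ i, ‖Real.exp (-(u/2)) • β (ψ i)‖ ^ 2))
      = (∑ b : Fin 2, ‖-((1/2 : ℝ) • ∑ α, γ α (γ b (χ α)))‖ ^ 2) *
          (∑ i, ‖ψ i‖ ^ 2)) := by
  have hterm : ∀ b : Fin 2,
      ‖-((1/2 : ℝ) • ∑ α, γ' α (γ' b (Real.exp (-(u/2)) • β (χ α))))‖ ^ 2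
      = Real.exp (-u) * ‖-((1/2 : ℝ) • ∑ α, γ α (γ b (χ α)))‖ ^ 2 := by
    intro b
    have hβ : ∀ α : Fin 2, γ' α (γ' b (Real.exp (-(u/2)) • β (χ α)))
        = Real.exp (-(u/2)) • β (γ α (γ b (χ α))) := by
      intro α
      rw [map_smul, map_smul, hcompat, hcompat]
    have he : Real.exp (-(u/2)) ^ 2 = Real.exp (-u) := by
      rw [sq, ← Real.exp_add]; ring_nf
    simp only [hβ]
    rw [← Finset.smul_sum, ← map_sum]
    simp only [norm_neg, norm_smul, β.norm_map, Real.norm_eq_abs, Real.abs_exp]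
    rw [mul_pow, mul_pow, mul_pow, ← he]
    ring
  have h1 : (∑ b : Fin 2,
        ‖-((1/2 : ℝ) • ∑ α, γ' α (γ' b (Real.exp (-(u/2)) • β (χ α))))‖ ^ 2
      = Real.exp (-u) * ∑ b : Fin 2, ‖-((1/2 : ℝ) • ∑ α, γ α (γ b (χ α)))‖ ^ 2) := by
    rw [Finset.mul_sum]; exact Finset.sum_congr rfl fun b _ => hterm b
  have h2 : ∑ i, ‖Real.exp (-(u/2)) • β (ψ i)‖ ^ 2
      = Real.exp (-u) * ∑ i, ‖ψ i‖ ^ 2 := by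
    rw [Finset.mul_sum]
    refine Finset.sum_congr rfl fun i _ => ?_
    have he : Real.exp (-(u/2)) ^ 2 = Real.exp (-u) := by
      rw [sq, ← Real.exp_add]; ring_nf
    rw [norm_smul, β.norm_map, mul_pow, Real.norm_eq_abs, Real.abs_exp, he]
  refine ⟨h1, h2, ?_, ?_⟩
  · rw [h1, h2]
    rw [show Real.exp (-(2*u)) = Real.exp (-u) * Real.exp (-u) by
      rw [← Real.exp_add]; ring_nf]
    ring
  · rw [h1, h2, show Real.exp (2*u) * (Real.exp (-u) * (∑ b : Fin 2, ‖-((1/2 : ℝ) • ∑ α, γ α (γ b (χ α)))‖ ^ 2) * (Real.exp (-u) * ∑ i, ‖ψ i‖ ^ 2)) = (Real.exp (2*u) * Real.exp (-u) * Real.exp (-u)) * ((∑ b : Fin 2, ‖-((1/2 : ℝ) • ∑ α, γ α (γ b (χ α)))‖ ^ 2) * (∑ i, ‖ψ i‖ ^ 2)) by ring, ← Real.exp_add, ← Real.exp_add,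
      show (2*u + -u + -u : ℝ) = 0 by ring, Real.exp_zero, one_mul]
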